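/- (McKinsey; Huber-Dyson; Mostowski) Let n : ℕ and let R be a finite subset of FreeGroup (Fin n). If the presented group G = PresentedGroup R is residually finite, i.e., for every g ∈ G with g ≠ 1 there exists a finite group H and a group homomorphism φ : G →* H with φ g ≠ 1, then the word problem for the presentation is decidable: the predicate on List (Fin n × Bool) asserting that the image of a word w in PresentedGroup R equals 1 is a ComputablePred. -/

import Mathlib

namespace WPAux
open FreeGroup
abbrev Wd (n : ℕ) := List (Fin n × Bool)
abbrev CertA (n : ℕ) := List (Wd n × ℕ × Bool)
variable {n : ℕ}
def conjWord (ws : List (Wd n)) (e : Wd n × ℕ × Bool) : Wd n :=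
  e.1 ++ (cond e.2.2 (ws.getD e.2.1 []) (invRev (ws.getD e.2.1 []))) ++ invRev e.1
def certWord (ws : List (Wd n)) (c : CertA n) : Wd n := (c.map (conjWord ws)).flatten
def checkA (ws : List (Wd n)) (w : Wd n) (c : CertA n) : Bool :=
  decide (reduce (w ++ invRev (certWord ws c)) = [])
def allB {β : Type*} (l : List β) (p : β → Bool) : Bool := l.foldr (fun a r => p a && r) true
def anyB {β : Type*} (l : List β) (p : β → Bool) : Bool := l.foldr (fun a r => p a || r) false
def applyL (σ : List ℕ) (j : ℕ) : ℕ := σ.getD j 0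
def letterL (ds : List (List ℕ × List ℕ)) (x : Fin n × Bool) : List ℕ :=
  cond x.2 (ds.getD x.1 ([], [])).1 (ds.getD x.1 ([], [])).2
def evalP (ds : List (List ℕ × List ℕ)) (u : Wd n) (j : ℕ) : ℕ :=
  u.foldr (fun x j => applyL (letterL ds x) j) j
def validD (k : ℕ) (d : List ℕ × List ℕ) : Bool :=
  decide (d.1.length = k) && decide (d.2.length = k) &&
  allB (List.range k) (fun j => decide (d.1.getD j 0 < k) && decide (d.2.getD j 0 < k) &&
    decide (d.2.getD (d.1.getD j 0) 0 = j) && decide (d.1.getD (d.2.getD j 0) 0 = j))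
def checkB (ws : List (Wd n)) (w : Wd n) (k : ℕ) (ds : List (List ℕ × List ℕ)) : Bool :=
  decide (ds.length = n) && allB ds (validD k) &&
  allB ws (fun r => allB (List.range k) fun j => decide (evalP ds r j = j)) &&
  anyB (List.range k) (fun j => !decide (evalP ds w j = j))
def certCheck (ws : List (Wd n)) (w : Wd n)
    (c : CertA n ⊕ ℕ × List (List ℕ × List ℕ)) : Option Bool :=
  Sum.casesOn c (fun c => cond (checkA ws w c) (some true) none)
    (fun kd => cond (checkB ws w kd.1 kd.2) (some false) none)

section PR
open Primrec

theorem primrec_invRev : Primrec (@invRev (Fin n)) :=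
  (Primrec.list_reverse.comp (Primrec.list_map Primrec.id
    ((Primrec.pair (fst.comp snd) (Primrec.not.comp (snd.comp snd))).to₂))).of_eq
    fun L => by simp [invRev]

def redStep (p : (Fin n × Bool) × Wd n × Wd n) : Wd n :=
  match p.2.2 with
  | [] => [p.1]
  | hd2 :: tl2 => cond (decide (p.1 = (hd2.1, !hd2.2))) tl2 (p.1 :: hd2 :: tl2)

theorem primrec_redStep : Primrec (@redStep n) := by
  have hH : Primrec fun z : ((Fin n × Bool) × Wd n × Wd n) × ((Fin n × Bool) × Wd n) =>
      cond (decide (z.1.1 = (z.2.1.1, !z.2.1.2))) z.2.2 (z.1.1 :: z.2.1 :: z.2.2) := by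
    have x : Primrec fun z : ((Fin n × Bool) × Wd n × Wd n) × ((Fin n × Bool) × Wd n) =>
        z.1.1 := fst.comp fst
    have hd2 : Primrec fun z : ((Fin n × Bool) × Wd n × Wd n) × ((Fin n × Bool) × Wd n) =>
        z.2.1 := fst.comp snd
    have tl2 : Primrec fun z : ((Fin n × Bool) × Wd n × Wd n) × ((Fin n × Bool) × Wd n) =>
        z.2.2 := snd.comp snd
    exact Primrec.cond (Primrec.eq.comp x (Primrec.pair (fst.comp hd2)
        (Primrec.not.comp (snd.comp hd2)))).decide tl2 (list_cons.comp x (list_cons.comp hd2 tl2))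
  exact (Primrec.list_casesOn (f := fun p : (Fin n × Bool) × Wd n × Wd n => p.2.2)
    (g := fun p : (Fin n × Bool) × Wd n × Wd n => [p.1])
    (snd.comp snd) (list_cons.comp fst (const [])) hH.to₂).of_eq fun p => by
      rcases p with ⟨x, l, ih⟩
      cases ih <;> rfl

theorem primrec_reduce : Primrec (@reduce (Fin n) _) := by
  have h := Primrec.list_rec (Primrec.id (α := Wd n)) (const ([] : Wd n))
    ((primrec_redStep.comp snd).to₂ :
      Primrec₂ fun (_ : Wd n) (p : (Fin n × Bool) × Wd n × Wd n) => redStep p)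
  refine h.of_eq fun L => ?_
  induction L with
  | nil => rfl
  | cons x L ih =>
    dsimp only at ih ⊢
    simp only [id_eq] at ih
    show redStep (x, L, List.rec [] (fun b l IH => redStep (b, l, IH)) L) = reduce (x :: L)
    rw [ih, reduce.cons]
    cases h : reduce L with
    | nil => rfl
    | cons hd2 tl2 =>
      show cond (decide (x = (hd2.1, !hd2.2))) tl2 (x :: hd2 :: tl2) =
        if x.1 = hd2.1 ∧ x.2 = !hd2.2 then tl2 else x :: hd2 :: tl2
      by_cases hx : x = (hd2.1, !hd2.2)
      · rw [if_pos (by rw [hx]; exact ⟨rfl, rfl⟩), hx]; simp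
      · rw [if_neg (fun hc => hx (Prod.ext_iff.mpr ⟨hc.1, hc.2⟩))]; simp [hx]

theorem primrec_certWord (ws : List (Wd n)) : Primrec (certWord ws) := by
  have hgd : Primrec fun e : Wd n × ℕ × Bool => ws.getD e.2.1 [] :=
    (Primrec.list_getD ([] : Wd n)).comp (const ws) (fst.comp snd)
  have hconj : Primrec (conjWord ws) :=
    list_append.comp
      (list_append.comp fst (Primrec.cond (snd.comp snd) hgd (primrec_invRev.comp hgd)))
      (primrec_invRev.comp fst)
  exact Primrec.list_flatten.comp (Primrec.list_map .id (hconj.comp snd).to₂)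

theorem primrec_checkA (ws : List (Wd n)) : Primrec₂ (checkA ws) :=
  (Primrec.eq.comp (primrec_reduce.comp (list_append.comp fst
    (primrec_invRev.comp ((primrec_certWord ws).comp snd)))) (const [])).decide.to₂

theorem primrec_allB {α β : Type*} [Primcodable α] [Primcodable β]
    {f : α → List β} {p : α → β → Bool} (hf : Primrec f) (hp : Primrec₂ p) :
    Primrec fun a => allB (f a) (p a) :=
  Primrec.list_foldr hf (const true)
    (((Primrec.dom_bool₂ (· && ·)).comp (hp.comp fst (fst.comp snd)) (snd.comp snd)).to₂)

theorem primrec_anyB {α β : Type*} [Primcodable α] [Primcodable β]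
    {f : α → List β} {p : α → β → Bool} (hf : Primrec f) (hp : Primrec₂ p) :
    Primrec fun a => anyB (f a) (p a) :=
  Primrec.list_foldr hf (const false)
    (((Primrec.dom_bool₂ (· || ·)).comp (hp.comp fst (fst.comp snd)) (snd.comp snd)).to₂)

theorem primrec_applyL : Primrec₂ applyL := Primrec.list_getD 0

theorem primrec_letterL : Primrec₂ (@letterL n) := by
  have hgd : Primrec fun z : List (List ℕ × List ℕ) × (Fin n × Bool) =>
      z.1.getD (z.2.1 : ℕ) ([], []) :=
    (Primrec.list_getD (([], []) : List ℕ × List ℕ)).comp fst (fin_val.comp (fst.comp snd))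
  exact (Primrec.cond (snd.comp snd) (fst.comp hgd) (snd.comp hgd)).to₂

theorem primrec_evalP : Primrec fun z : List (List ℕ × List ℕ) × Wd n × ℕ =>
    evalP z.1 z.2.1 z.2.2 :=
  Primrec.list_foldr (fst.comp snd) (snd.comp snd)
    ((primrec_applyL.comp
      (primrec_letterL.comp (fst.comp fst) (fst.comp snd)) (snd.comp snd)).to₂)

theorem primrec_validD : Primrec₂ validD := by
  have K : Primrec fun z : (ℕ × (List ℕ × List ℕ)) × ℕ => z.1.1 := fst.comp fst
  have D1 : Primrec fun z : (ℕ × (List ℕ × List ℕ)) × ℕ => z.1.2.1 := fst.comp (snd.comp fst)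
  have D2 : Primrec fun z : (ℕ × (List ℕ × List ℕ)) × ℕ => z.1.2.2 := snd.comp (snd.comp fst)
  have J : Primrec fun z : (ℕ × (List ℕ × List ℕ)) × ℕ => z.2 := snd
  have g1 : Primrec fun z : (ℕ × (List ℕ × List ℕ)) × ℕ => z.1.2.1.getD z.2 0 :=
    (Primrec.list_getD 0).comp D1 J
  have g2 : Primrec fun z : (ℕ × (List ℕ × List ℕ)) × ℕ => z.1.2.2.getD z.2 0 :=
    (Primrec.list_getD 0).comp D2 J
  have g3 : Primrec fun z : (ℕ × (List ℕ × List ℕ)) × ℕ => z.1.2.2.getD (z.1.2.1.getD z.2 0) 0 :=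
    (Primrec.list_getD 0).comp D2 g1
  have g4 : Primrec fun z : (ℕ × (List ℕ × List ℕ)) × ℕ => z.1.2.1.getD (z.1.2.2.getD z.2 0) 0 :=
    (Primrec.list_getD 0).comp D1 g2
  have hand := Primrec.dom_bool₂ (· && ·)
  have inner : Primrec₂ fun (a : ℕ × (List ℕ × List ℕ)) (j : ℕ) =>
      decide (a.2.1.getD j 0 < a.1) && decide (a.2.2.getD j 0 < a.1) &&
      decide (a.2.2.getD (a.2.1.getD j 0) 0 = j) && decide (a.2.1.getD (a.2.2.getD j 0) 0 = j) :=
    (hand.comp (hand.comp (hand.comp (nat_lt.comp g1 K).decide (nat_lt.comp g2 K).decide)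
      (Primrec.eq.comp g3 J).decide) (Primrec.eq.comp g4 J).decide).to₂
  exact ((hand.comp
    (hand.comp (Primrec.eq.comp (list_length.comp (fst.comp snd)) fst).decide
      (Primrec.eq.comp (list_length.comp (snd.comp snd)) fst).decide)
    (primrec_allB (list_range.comp fst) inner)).to₂).of_eq fun k d => by
      simp [validD]

theorem primrec_checkB (ws : List (Wd n)) :
    Primrec₂ fun (w : Wd n) (kd : ℕ × List (List ℕ × List ℕ)) => checkB ws w kd.1 kd.2 := by
  have hand := Primrec.dom_bool₂ (· && ·)
  have K : Primrec fun z : Wd n × ℕ × List (List ℕ × List ℕ) => z.2.1 := fst.comp snd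
  have DS : Primrec fun z : Wd n × ℕ × List (List ℕ × List ℕ) => z.2.2 := snd.comp snd
  have c1 : Primrec fun z : Wd n × ℕ × List (List ℕ × List ℕ) =>
      decide (z.2.2.length = n) := (Primrec.eq.comp (list_length.comp DS) (const n)).decide
  have c2 : Primrec fun z : Wd n × ℕ × List (List ℕ × List ℕ) => allB z.2.2 (validD z.2.1) :=
    primrec_allB DS (primrec_validD.comp (K.comp fst) snd).to₂
  have hev0 : Primrec fun z : ((Wd n × ℕ × List (List ℕ × List ℕ)) × Wd n) × ℕ =>
      evalP z.1.1.2.2 z.1.2 z.2 :=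
    primrec_evalP.comp (Primrec.pair (snd.comp (snd.comp (fst.comp fst)))
      (Primrec.pair (snd.comp fst) snd))
  have hev : Primrec₂ fun (z : (Wd n × ℕ × List (List ℕ × List ℕ)) × Wd n) (j : ℕ) =>
      decide (evalP z.1.2.2 z.2 j = j) :=
    (Primrec.eq.comp hev0 snd).decide.to₂
  have c3 : Primrec fun z : Wd n × ℕ × List (List ℕ × List ℕ) =>
      allB ws (fun r => allB (List.range z.2.1) fun j => decide (evalP z.2.2 r j = j)) :=
    primrec_allB (const ws)
      ((primrec_allB (list_range.comp (K.comp fst)) hev).to₂)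
  have hev0' : Primrec fun z : (Wd n × ℕ × List (List ℕ × List ℕ)) × ℕ =>
      evalP z.1.2.2 z.1.1 z.2 :=
    primrec_evalP.comp (Primrec.pair (snd.comp (snd.comp fst))
      (Primrec.pair (fst.comp fst) snd))
  have c4 : Primrec fun z : Wd n × ℕ × List (List ℕ × List ℕ) =>
      anyB (List.range z.2.1) (fun j => !decide (evalP z.2.2 z.1 j = j)) :=
    primrec_anyB (list_range.comp K)
      ((Primrec.not.comp (Primrec.eq.comp hev0' snd).decide).to₂)
  exact ((hand.comp (hand.comp (hand.comp c1 c2) c3) c4).to₂).of_eq fun w kd => by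
    simp [checkB]

theorem primrec_certCheck (ws : List (Wd n)) : Primrec₂ (certCheck ws) := by
  have h1 : Primrec₂ fun (w : Wd n) (c : CertA n) => cond (checkA ws w c) (some true) none :=
    (Primrec.cond ((primrec_checkA ws).comp fst snd) (const (some true)) (const none)).to₂
  have h2 : Primrec₂ fun (w : Wd n) (kd : ℕ × List (List ℕ × List ℕ)) =>
      cond (checkB ws w kd.1 kd.2) (some false) none :=
    (Primrec.cond ((primrec_checkB ws).comp fst snd) (const (some false)) (const none)).to₂
  exact (Primrec.sumCasesOn snd (h1.comp (fst.comp fst) snd).to₂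
    (h2.comp (fst.comp fst) snd).to₂).to₂

end PR
theorem certWord_nil (ws : List (Wd n)) : certWord ws [] = [] := rfl

theorem certWord_cons (ws : List (Wd n)) (e) (c : CertA n) :
    certWord ws (e :: c) = conjWord ws e ++ certWord ws c := by
  simp [certWord]

theorem mk_conjWord_mem {R : Set (FreeGroup (Fin n))} {ws : List (Wd n)}
    (hws : ∀ u ∈ ws, FreeGroup.mk u ∈ R) (e : Wd n × ℕ × Bool) :
    FreeGroup.mk (conjWord ws e) ∈ Subgroup.normalClosure R := by
  obtain ⟨g, i, b⟩ := e
  have hrel : FreeGroup.mk (ws.getD i []) ∈ Subgroup.normalClosure R := by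
    rcases lt_or_ge i ws.length with h | h
    · rw [List.getD_eq_getElem _ _ h]
      exact Subgroup.subset_normalClosure (hws _ (List.getElem_mem _))
    · rw [List.getD_eq_default _ _ h]
      exact (Subgroup.normalClosure R).one_mem
  have hs : FreeGroup.mk (cond b (ws.getD i []) (invRev (ws.getD i [])))
      ∈ Subgroup.normalClosure R := by
    cases b
    · simpa [← inv_mk] using (Subgroup.normalClosure R).inv_mem hrel
    · simpa using hrel
  have : FreeGroup.mk (conjWord ws (g, i, b)) =
      FreeGroup.mk g * FreeGroup.mk (cond b (ws.getD i []) (invRev (ws.getD i [])))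
        * (FreeGroup.mk g)⁻¹ := by
    simp [conjWord, mul_mk, inv_mk]
  rw [this]
  exact Subgroup.normalClosure_normal.conj_mem _ hs _

theorem mk_certWord_mem {R : Set (FreeGroup (Fin n))} {ws : List (Wd n)}
    (hws : ∀ u ∈ ws, FreeGroup.mk u ∈ R) (c : CertA n) :
    FreeGroup.mk (certWord ws c) ∈ Subgroup.normalClosure R := by
  induction c with
  | nil => exact (Subgroup.normalClosure R).one_mem
  | cons e c ih =>
    rw [certWord_cons, ← mul_mk]
    exact (Subgroup.normalClosure R).mul_mem (mk_conjWord_mem hws e) ih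

theorem checkA_sound {R : Set (FreeGroup (Fin n))} {ws : List (Wd n)}
    (hws : ∀ u ∈ ws, FreeGroup.mk u ∈ R) {w : Wd n} {c : CertA n}
    (h : checkA ws w c = true) :
    FreeGroup.mk w ∈ Subgroup.normalClosure R := by
  have h' : reduce (w ++ invRev (certWord ws c)) = reduce ([] : Wd n) := by
    simpa [checkA] using h
  have := FreeGroup.reduce.exact h'
  rw [← mul_mk, inv_mk.symm, ← one_eq_mk] at this
  have hw : FreeGroup.mk w = FreeGroup.mk (certWord ws c) := by
    have := mul_inv_eq_one.mp this
    exact this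
  rw [hw]
  exact mk_certWord_mem hws c

theorem certWord_append (ws : List (Wd n)) (c₁ c₂ : CertA n) :
    certWord ws (c₁ ++ c₂) = certWord ws c₁ ++ certWord ws c₂ := by
  simp [certWord]

theorem mk_conjWord_inv (ws : List (Wd n)) (e : Wd n × ℕ × Bool) :
    FreeGroup.mk (conjWord ws (e.1, e.2.1, !e.2.2)) = (FreeGroup.mk (conjWord ws e))⁻¹ := by
  obtain ⟨g, i, b⟩ := e
  cases b <;> simp [conjWord, ← mul_mk, ← inv_mk, mul_assoc]

theorem mk_certWord_reverse (ws : List (Wd n)) (c : CertA n) :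
    FreeGroup.mk (certWord ws ((c.map fun e => (e.1, e.2.1, !e.2.2)).reverse)) =
      (FreeGroup.mk (certWord ws c))⁻¹ := by
  induction c with
  | nil => simp [certWord, ← one_eq_mk]
  | cons e c ih =>
    simp only [List.map_cons, List.reverse_cons, certWord_append, certWord_cons, ← mul_mk]
    rw [ih]
    have h3 : certWord ws ([] : CertA n) = [] := rfl
    rw [mk_conjWord_inv, h3, ← one_eq_mk, mul_one, mul_inv_rev]

theorem exists_cert_of_mem {R : Set (FreeGroup (Fin n))} {ws : List (Wd n)}
    (hws2 : ∀ r ∈ R, ∃ i, FreeGroup.mk (ws.getD i []) = r)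
    {x : FreeGroup (Fin n)} (hx : x ∈ Subgroup.normalClosure R) :
    ∃ c : CertA n, FreeGroup.mk (certWord ws c) = x := by
  refine Subgroup.closure_induction ?_ ?_ ?_ ?_ hx
  · rintro y hy
    rw [Group.mem_conjugatesOfSet_iff] at hy
    obtain ⟨r, hr, hconj⟩ := hy
    obtain ⟨g, rfl⟩ := isConj_iff.mp hconj
    obtain ⟨i, hi⟩ := hws2 r hr
    refine ⟨[(g.toWord, i, true)], ?_⟩
    have : certWord ws [(g.toWord, i, true)] = conjWord ws (g.toWord, i, true) := by
      simp [certWord]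
    rw [this]
    simp only [conjWord, cond_true, ← mul_mk, ← inv_mk, mk_toWord, hi]
  · exact ⟨[], by simp [certWord, ← one_eq_mk]⟩
  · rintro x y _ _ ⟨c₁, rfl⟩ ⟨c₂, rfl⟩
    exact ⟨c₁ ++ c₂, by rw [certWord_append, ← mul_mk]⟩
  · rintro x _ ⟨c, rfl⟩
    exact ⟨(c.map fun e => (e.1, e.2.1, !e.2.2)).reverse, mk_certWord_reverse ws c⟩

theorem checkA_complete {R : Set (FreeGroup (Fin n))} {ws : List (Wd n)}
    (hws2 : ∀ r ∈ R, ∃ i, FreeGroup.mk (ws.getD i []) = r)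
    {w : Wd n} (h : FreeGroup.mk w ∈ Subgroup.normalClosure R) :
    ∃ c : CertA n, checkA ws w c = true := by
  obtain ⟨c, hc⟩ := exists_cert_of_mem hws2 h
  refine ⟨c, ?_⟩
  have : FreeGroup.mk (w ++ invRev (certWord ws c)) = FreeGroup.mk ([] : Wd n) := by
    rw [← mul_mk, ← inv_mk, hc, ← one_eq_mk, mul_inv_eq_one]
  simpa [checkA] using FreeGroup.reduce.sound this
theorem allB_iff {β : Type*} (l : List β) (p : β → Bool) :
    allB l p = true ↔ ∀ x ∈ l, p x = true := by
  induction l with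
  | nil => simp [allB]
  | cons a l ih => simp [allB, List.foldr_cons, Bool.and_eq_true] at ih ⊢; rw [ih]; tauto

theorem anyB_iff {β : Type*} (l : List β) (p : β → Bool) :
    anyB l p = true ↔ ∃ x ∈ l, p x = true := by
  induction l with
  | nil => simp [anyB]
  | cons a l ih => simp only [anyB, List.foldr_cons, Bool.or_eq_true] at ih ⊢; rw [ih]; simp

theorem validD_spec {k : ℕ} {d : List ℕ × List ℕ} (hd : validD k d = true) {j : ℕ}
    (hj : j < k) :
    d.1.getD j 0 < k ∧ d.2.getD j 0 < k ∧
      d.2.getD (d.1.getD j 0) 0 = j ∧ d.1.getD (d.2.getD j 0) 0 = j := by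
  rw [validD, Bool.and_eq_true, Bool.and_eq_true, allB_iff] at hd
  have := hd.2 j (List.mem_range.mpr hj)
  simp only [Bool.and_eq_true, decide_eq_true_eq] at this
  exact ⟨this.1.1.1, this.1.1.2, this.1.2, this.2⟩

/-- the permutation determined by a valid table -/
def permOf (k : ℕ) (d : List ℕ × List ℕ) (hd : validD k d = true) : Equiv.Perm (Fin k) where
  toFun j := ⟨d.1.getD j 0, (validD_spec hd j.isLt).1⟩
  invFun j := ⟨d.2.getD j 0, (validD_spec hd j.isLt).2.1⟩
  left_inv j := Fin.ext (validD_spec hd j.isLt).2.2.1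
  right_inv j := Fin.ext (validD_spec hd j.isLt).2.2.2

theorem permOf_apply (k : ℕ) (d : List ℕ × List ℕ) (hd : validD k d = true) (j : Fin k) :
    (permOf k d hd j : ℕ) = d.1.getD j 0 := rfl

theorem permOf_inv_apply (k : ℕ) (d : List ℕ × List ℕ) (hd : validD k d = true) (j : Fin k) :
    ((permOf k d hd)⁻¹ j : ℕ) = d.2.getD j 0 := rfl

/-- bridging: evaluation of words agrees with the lifted homomorphism -/
theorem evalP_eq {k : ℕ} (f : Fin n → Equiv.Perm (Fin k)) (ds : List (List ℕ × List ℕ))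
    (h : ∀ (x : Fin n × Bool) (j : Fin k),
      applyL (letterL ds x) j = ((cond x.2 (f x.1) (f x.1)⁻¹) j : ℕ)) :
    ∀ (u : Wd n) (j : Fin k), evalP ds u j = ((FreeGroup.lift f (FreeGroup.mk u)) j : ℕ) := by
  intro u
  induction u with
  | nil => intro j; simp [evalP, ← one_eq_mk]
  | cons x u ih =>
    intro j
    have hmk : FreeGroup.mk (x :: u) = FreeGroup.mk [x] * FreeGroup.mk u := by
      rw [mul_mk]; rfl
    have hl : FreeGroup.lift f (FreeGroup.mk [x]) = cond x.2 (f x.1) (f x.1)⁻¹ := by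
      rw [lift_mk]; simp
    have : evalP ds (x :: u) j = applyL (letterL ds x) (evalP ds u j) := rfl
    rw [this, ih j, h x ((FreeGroup.lift f (FreeGroup.mk u)) j), hmk, MonoidHom.map_mul, hl,
      Equiv.Perm.mul_apply]

theorem getD_ofFn {k : ℕ} (g : Fin k → ℕ) {j : ℕ} (hj : j < k) :
    (List.ofFn g).getD j 0 = g ⟨j, hj⟩ := by
  rw [List.getD_eq_getElem _ _ (by simp [hj]), List.getElem_ofFn]

theorem checkB_sound {n : ℕ} {R : Set (FreeGroup (Fin n))} {ws : List (Wd n)}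
    (hws3 : ∀ r ∈ R, ∃ u ∈ ws, FreeGroup.mk u = r)
    {w : Wd n} {k : ℕ} {ds : List (List ℕ × List ℕ)}
    (h : checkB ws w k ds = true) :
    FreeGroup.mk w ∉ Subgroup.normalClosure R := by
  rw [checkB, Bool.and_eq_true, Bool.and_eq_true, Bool.and_eq_true] at h
  obtain ⟨⟨⟨hlen, hvalid⟩, hrel⟩, hw⟩ := h
  rw [decide_eq_true_eq] at hlen
  rw [allB_iff] at hvalid hrel
  rw [anyB_iff] at hw
  have hv : ∀ i : Fin n, validD k (ds.getD (i : ℕ) ([], [])) = true := fun i => by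
    apply hvalid
    rw [List.getD_eq_getElem _ _ (by rw [hlen]; exact i.isLt)]
    exact List.getElem_mem _
  set f : Fin n → Equiv.Perm (Fin k) := fun i => permOf k _ (hv i) with hf
  have hh : ∀ (x : Fin n × Bool) (j : Fin k),
      applyL (letterL ds x) j = ((cond x.2 (f x.1) (f x.1)⁻¹) j : ℕ) := by
    rintro ⟨i, b⟩ j
    simp only [hf]
    cases b
    · simpa [letterL, applyL] using (permOf_inv_apply k _ (hv i) j).symm
    · simpa [letterL, applyL] using (permOf_apply k _ (hv i) j).symm
  have heval := evalP_eq f ds hh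
  have hker : ∀ r ∈ R, FreeGroup.lift f r = 1 := by
    intro r hr
    obtain ⟨u, hu, rfl⟩ := hws3 r hr
    ext j
    have h1 := hrel u hu
    rw [allB_iff] at h1
    have h2 := h1 (j : ℕ) (List.mem_range.mpr j.isLt)
    rw [decide_eq_true_eq, heval u j] at h2
    simpa using h2
  intro hmem
  have hle : Subgroup.normalClosure R ≤ (FreeGroup.lift f).ker :=
    Subgroup.normalClosure_le_normal fun r hr => MonoidHom.mem_ker.mpr (hker r hr)
  have h1 : FreeGroup.lift f (FreeGroup.mk w) = 1 := MonoidHom.mem_ker.mp (hle hmem)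
  obtain ⟨j, hj, hne⟩ := hw
  rw [List.mem_range] at hj
  rw [Bool.not_eq_true', decide_eq_false_iff_not] at hne
  apply hne
  rw [heval w ⟨j, hj⟩, h1]
  rfl

theorem checkB_complete {n : ℕ} {R : Set (FreeGroup (Fin n))} {ws : List (Wd n)}
    (hws1 : ∀ u ∈ ws, FreeGroup.mk u ∈ R) {w : Wd n} {k : ℕ}
    (Φ : FreeGroup (Fin n) →* Equiv.Perm (Fin k))
    (hΦR : ∀ r ∈ R, Φ r = 1) (hΦw : Φ (FreeGroup.mk w) ≠ 1) :
    ∃ ds, checkB ws w k ds = true := by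
  set f : Fin n → Equiv.Perm (Fin k) := fun i => Φ (of i) with hf
  have hlift : ∀ x, FreeGroup.lift f x = Φ x := fun x =>
    (FreeGroup.lift_unique Φ (fun a => by rw [hf])).symm
  set dfun : Fin n → List ℕ × List ℕ := fun i =>
    (List.ofFn fun j => ((f i) j : ℕ), List.ofFn fun j => (((f i)⁻¹) j : ℕ)) with hdfun
  refine ⟨List.ofFn dfun, ?_⟩
  have hgetds : ∀ i : Fin n, (List.ofFn dfun).getD (i : ℕ) ([], []) = dfun i := fun i => by
    rw [List.getD_eq_getElem _ _ (by simp [i.isLt]), List.getElem_ofFn]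
  have hh : ∀ (x : Fin n × Bool) (j : Fin k),
      applyL (letterL (List.ofFn dfun) x) j = ((cond x.2 (f x.1) (f x.1)⁻¹) j : ℕ) := by
    rintro ⟨i, b⟩ j
    have e1 : ((List.ofFn dfun).getD (i : ℕ) ([], [])).1.getD (j : ℕ) 0 = ((f i) j : ℕ) := by
      rw [hgetds i]; simp only [hdfun]; exact getD_ofFn _ j.isLt
    have e2 : ((List.ofFn dfun).getD (i : ℕ) ([], [])).2.getD (j : ℕ) 0 = (((f i)⁻¹) j : ℕ) := by
      rw [hgetds i]; simp only [hdfun]; exact getD_ofFn _ j.isLt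
    cases b
    · simp only [letterL, applyL] at e2 ⊢; exact e2
    · simp only [letterL, applyL] at e1 ⊢; exact e1
  have heval := evalP_eq f (List.ofFn dfun) hh
  rw [checkB, Bool.and_eq_true, Bool.and_eq_true, Bool.and_eq_true]
  refine ⟨⟨⟨by simp, ?_⟩, ?_⟩, ?_⟩
  · rw [allB_iff]
    intro d hd
    rw [List.mem_ofFn] at hd
    obtain ⟨i, rfl⟩ := hd
    rw [validD, Bool.and_eq_true, Bool.and_eq_true, allB_iff]
    simp only [hdfun]
    refine ⟨⟨by simp, by simp⟩, ?_⟩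
    intro j hj
    rw [List.mem_range] at hj
    rw [getD_ofFn (fun j => ((f i) j : ℕ)) hj, getD_ofFn (fun j => (((f i)⁻¹) j : ℕ)) hj,
        getD_ofFn (fun j => (((f i)⁻¹) j : ℕ)) (Fin.isLt _),
        getD_ofFn (fun j => ((f i) j : ℕ)) (Fin.isLt _)]
    simp
  · rw [allB_iff]
    intro u hu
    rw [allB_iff]
    intro j hj
    rw [List.mem_range] at hj
    rw [decide_eq_true_eq, heval u ⟨j, hj⟩, hlift, hΦR _ (hws1 u hu)]
    rfl
  · rw [anyB_iff]
    have : ¬ ∀ j : Fin k, Φ (FreeGroup.mk w) j = j := by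
      intro hj
      exact hΦw (Equiv.ext hj)
    push_neg at this
    obtain ⟨j, hj⟩ := this
    refine ⟨(j : ℕ), List.mem_range.mpr j.isLt, ?_⟩
    rw [Bool.not_eq_true', decide_eq_false_iff_not]
    rw [heval w j, hlift]
    exact fun h => hj (Fin.ext h)


end WPAux

namespace WPAux

def bigF (ws : List (Wd n)) (w : Wd n) (m : ℕ) : Option Bool :=
  (Encodable.decode (α := CertA n ⊕ ℕ × List (List ℕ × List ℕ)) m).bind (certCheck ws w)

set_option maxHeartbeats 1000000 in
theorem primrec_bigF (ws : List (Wd n)) : Primrec₂ (bigF ws) :=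
  (Primrec.option_bind (Primrec.decode.comp Primrec.snd)
    (((primrec_certCheck ws).comp (Primrec.fst.comp Primrec.fst) Primrec.snd).to₂)).to₂

theorem computable_bigF (ws : List (Wd n)) : Computable₂ (bigF ws) :=
  (primrec_bigF ws).to_comp

theorem main_aux {n : ℕ} (ws : List (Wd n)) (p : Wd n → Prop) [DecidablePred p]
    (hsound : ∀ w m b, bigF ws w m = some b → b = decide (p w))
    (hdom : ∀ w, ∃ m b, bigF ws w m = some b) : ComputablePred p := by
  refine ⟨inferInstance, ?_⟩
  have hpart : Partrec fun w => Nat.rfindOpt (bigF ws w) :=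
    Partrec.rfindOpt (computable_bigF ws)
  refine hpart.of_eq_tot fun w => ?_
  have hd : (Nat.rfindOpt (bigF ws w)).Dom := by
    rw [Nat.rfindOpt_dom]
    obtain ⟨m, b, hb⟩ := hdom w
    exact ⟨m, b, hb⟩
  have hget : (Nat.rfindOpt (bigF ws w)).get hd ∈ Nat.rfindOpt (bigF ws w) := Part.get_mem hd
  obtain ⟨m, hm⟩ := Nat.rfindOpt_spec hget
  have heq := hsound w m _ hm
  rw [heq] at hget
  exact hget

end WPAux

/-- (McKinsey; Huber-Dyson; Mostowski) A finitely presented residually finite group has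
decidable word problem. -/
theorem residually_finite_word_problem_decidable (n : ℕ) (R : Set (FreeGroup (Fin n)))
    (hR : R.Finite)
    (hrf : ∀ g : PresentedGroup R, g ≠ 1 →
      ∃ (H : Type) (_ : Group H) (_ : Finite H) (φ : PresentedGroup R →* H), φ g ≠ 1) :
    ComputablePred fun w : List (Fin n × Bool) =>
      (QuotientGroup.mk (FreeGroup.mk w) : PresentedGroup R) = 1 := by
  classical
  set ws : List (WPAux.Wd n) := hR.toFinset.toList.map FreeGroup.toWord with hws
  have hws1 : ∀ u ∈ ws, FreeGroup.mk u ∈ R := by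
    intro u hu
    rw [hws, List.mem_map] at hu
    obtain ⟨r, hr, rfl⟩ := hu
    rw [FreeGroup.mk_toWord]
    exact hR.mem_toFinset.mp (Finset.mem_toList.mp hr)
  have hws2 : ∀ r ∈ R, ∃ i, FreeGroup.mk (ws.getD i []) = r := by
    intro r hr
    have hmem : FreeGroup.toWord r ∈ ws := by
      rw [hws, List.mem_map]
      exact ⟨r, Finset.mem_toList.mpr (hR.mem_toFinset.mpr hr), rfl⟩
    obtain ⟨i, hi, hget⟩ := List.mem_iff_getElem.mp hmem
    exact ⟨i, by rw [List.getD_eq_getElem _ _ hi, hget, FreeGroup.mk_toWord]⟩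
  have hws3 : ∀ r ∈ R, ∃ u ∈ ws, FreeGroup.mk u = r := by
    intro r hr
    refine ⟨FreeGroup.toWord r, ?_, FreeGroup.mk_toWord⟩
    rw [hws, List.mem_map]
    exact ⟨r, Finset.mem_toList.mpr (hR.mem_toFinset.mpr hr), rfl⟩
  have hiff : ∀ w : WPAux.Wd n,
      ((QuotientGroup.mk (FreeGroup.mk w) : PresentedGroup R) = 1) ↔
        FreeGroup.mk w ∈ Subgroup.normalClosure R := fun w =>
    QuotientGroup.eq_one_iff _
  apply WPAux.main_aux ws
  -- soundness
  · intro w m b hb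
    rw [WPAux.bigF] at hb
    cases hdec : (Encodable.decode (α := WPAux.CertA n ⊕ ℕ × List (List ℕ × List ℕ)) m) with
    | none => rw [hdec] at hb; simp at hb
    | some c =>
      rw [hdec] at hb
      simp only [Option.bind_some] at hb
      cases c with
      | inl c =>
        cases hA : WPAux.checkA ws w c with
        | false => simp [WPAux.certCheck, hA] at hb
        | true =>
          have hpw : (QuotientGroup.mk (FreeGroup.mk w) : PresentedGroup R) = 1 :=
            (hiff w).mpr (WPAux.checkA_sound hws1 hA)
          simp [WPAux.certCheck, hA] at hb
          simp [← hb, hpw]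
      | inr kd =>
        cases hB : WPAux.checkB ws w kd.1 kd.2 with
        | false => simp [WPAux.certCheck, hB] at hb
        | true =>
          have hpw : ¬ (QuotientGroup.mk (FreeGroup.mk w) : PresentedGroup R) = 1 :=
            fun h => (WPAux.checkB_sound hws3 hB) ((hiff w).mp h)
          simp [WPAux.certCheck, hB] at hb
          simp [← hb, hpw]
  -- completeness / domain
  · intro w
    by_cases hpw : (QuotientGroup.mk (FreeGroup.mk w) : PresentedGroup R) = 1
    · obtain ⟨c, hc⟩ := WPAux.checkA_complete hws2 ((hiff w).mp hpw)
      refine ⟨Encodable.encode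
        (Sum.inl c : WPAux.CertA n ⊕ ℕ × List (List ℕ × List ℕ)), true, ?_⟩
      rw [WPAux.bigF, Encodable.encodek]
      simp [WPAux.certCheck, hc]
    · obtain ⟨H, hG, hFin, φ, hφ⟩ := hrf _ hpw
      letI := hG
      letI := hFin
      letI : Fintype H := Fintype.ofFinite H
      set k := Fintype.card H with hk
      set e : H ≃ Fin k := Fintype.equivFin H with he
      let θ : H →* Equiv.Perm H := MulAction.toPermHom H H
      let pc : Equiv.Perm H →* Equiv.Perm (Fin k) :=
        { toFun := fun σ => e.permCongr σ
          map_one' := by ext x; simp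
          map_mul' := fun σ τ => by ext x; simp }
      let Φ : FreeGroup (Fin n) →* Equiv.Perm (Fin k) :=
        pc.comp (θ.comp (φ.comp (QuotientGroup.mk' (Subgroup.normalClosure R))))
      have hΦR : ∀ r ∈ R, Φ r = 1 := by
        intro r hr
        have h1 : (QuotientGroup.mk' (Subgroup.normalClosure R)) r = 1 :=
          (QuotientGroup.eq_one_iff _).mpr (Subgroup.subset_normalClosure hr)
        show pc (θ (φ ((QuotientGroup.mk' (Subgroup.normalClosure R)) r))) = 1
        rw [h1]
        show pc (θ (φ (1 : PresentedGroup R))) = 1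
        rw [map_one, map_one, map_one]
      have hΦw : Φ (FreeGroup.mk w) ≠ 1 := by
        intro hone
        apply hφ
        have h2 : ∀ x : H, φ (QuotientGroup.mk (FreeGroup.mk w)) * x = x := by
          intro x
          have h3 : (e.permCongr (θ (φ (QuotientGroup.mk (FreeGroup.mk w))))) (e x) = e x := by
            have : e.permCongr (θ (φ (QuotientGroup.mk (FreeGroup.mk w)))) =
                Φ (FreeGroup.mk w) := rfl
            rw [this, hone]
            rfl
          rw [Equiv.permCongr_apply, Equiv.symm_apply_apply] at h3
          exact e.injective h3
        have := h2 1
        rwa [mul_one] at this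
      obtain ⟨ds, hds⟩ := WPAux.checkB_complete hws1 Φ hΦR hΦw
      refine ⟨Encodable.encode
        (Sum.inr (k, ds) : WPAux.CertA n ⊕ ℕ × List (List ℕ × List ℕ)), false, ?_⟩
      rw [WPAux.bigF, Encodable.encodek]
      simp [WPAux.certCheck, hds]
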